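/- Let β ≥ 1 and for t > 0 define g(x,t) = ∫_ℝ e^{-t|ξ|^{2β}} e^{i x ξ} dξ. Then g(·,t) is integrable for every t > 0, and its L¹(ℝ) norm is independent of t: ‖g(·,t)‖_{L¹(ℝ)} = ‖g(·,1)‖_{L¹(ℝ)} < ∞. -/

import Mathlib

open MeasureTheory Real

/-- The 1D kernel function associated with the Fourier multiplier `e^{-t|ξ|^{2β}}`:
`g β t x = ∫_ℝ e^{-t|ξ|^{2β}} e^{i x ξ} dξ`. -/
noncomputable def kernelG (β t x : ℝ) : ℂ :=
  ∫ ξ : ℝ, (Real.exp (-t * |ξ| ^ (2 * β)) : ℂ) * Complex.exp (Complex.I * x * ξ)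

open Set FourierTransform Filter

section Aux

variable {p t : ℝ}

/-- continuity of `|x| ^ s` for `s ≥ 0`. -/
lemma continuous_abs_rpow {s : ℝ} (hs : 0 ≤ s) : Continuous fun x : ℝ => |x| ^ s :=
  continuous_iff_continuousAt.2 fun _ =>
    (continuous_abs.continuousAt).rpow_const (Or.inr hs)

lemma aux_integrable (hp : 1 ≤ p) (ht : 0 < t) {s : ℝ} (hs : 0 ≤ s) :
    Integrable fun ξ : ℝ => |ξ| ^ s * Real.exp (-t * |ξ| ^ p) := by
  have h1 : IntegrableOn (fun ξ : ℝ => |ξ| ^ s * Real.exp (-t * |ξ| ^ p)) (Ioi 0) := by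
    refine (integrableOn_rpow_mul_exp_neg_mul_rpow (by linarith : (-1:ℝ) < s) (by linarith : (0:ℝ) < p) ht).congr_fun
      (fun x hx => ?_) measurableSet_Ioi
    rw [abs_of_pos hx]
  have h2 : IntegrableOn (fun ξ : ℝ => |ξ| ^ s * Real.exp (-t * |ξ| ^ p)) (Iio 0) := by
    rw [← (Measure.measurePreserving_neg (volume : Measure ℝ)).integrableOn_comp_preimage
        (Homeomorph.neg ℝ).measurableEmbedding]
    simp only [Function.comp_def, neg_preimage, neg_Iio, neg_neg, neg_zero, abs_neg]
    exact h1
  rw [← integrableOn_univ, ← Iio_union_Ici (a := (0:ℝ)), integrableOn_union,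
    integrableOn_Ici_iff_integrableOn_Ioi]
  exact ⟨h2, h1⟩

lemma abs_mul_abs_rpow (hp : 2 ≤ p) (ξ : ℝ) : |ξ| * |ξ| ^ (p - 2) = |ξ| ^ (p - 1) := by
  rcases eq_or_ne ξ 0 with rfl | hξ
  · simp [Real.zero_rpow (by linarith : p - 1 ≠ 0)]
  · have h := Real.rpow_add (abs_pos.2 hξ) 1 (p - 2)
    rw [Real.rpow_one] at h
    rw [show p - 1 = 1 + (p - 2) by ring, h]

lemma sq_mul_abs_rpow (hp : 2 ≤ p) (ξ : ℝ) :
    (ξ * |ξ| ^ (p - 2)) * (ξ * |ξ| ^ (p - 2)) = |ξ| ^ (2 * p - 2) := by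
  have h : (ξ * |ξ| ^ (p - 2)) * (ξ * |ξ| ^ (p - 2))
      = (|ξ| * |ξ| ^ (p - 2)) * (|ξ| * |ξ| ^ (p - 2)) := by
    rw [show (ξ * |ξ| ^ (p - 2)) * (ξ * |ξ| ^ (p - 2))
        = (ξ * ξ) * (|ξ| ^ (p - 2) * |ξ| ^ (p - 2)) by ring,
      show (|ξ| * |ξ| ^ (p - 2)) * (|ξ| * |ξ| ^ (p - 2))
        = (|ξ| * |ξ|) * (|ξ| ^ (p - 2) * |ξ| ^ (p - 2)) by ring,
      abs_mul_abs_self]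
  rw [h, abs_mul_abs_rpow hp]
  rcases eq_or_ne ξ 0 with rfl | hξ
  · simp [Real.zero_rpow (by linarith : p - 1 ≠ 0),
      Real.zero_rpow (by linarith : 2 * p - 2 ≠ 0)]
  · rw [← Real.rpow_add (abs_pos.2 hξ)]
    congr 1
    ring

lemma my_hasDerivAt_abs_rpow (hp : 2 ≤ p) (ξ : ℝ) :
    HasDerivAt (fun x : ℝ => |x| ^ p) (p * ξ * |ξ| ^ (p - 2)) ξ :=
  (hasDerivAt_abs_rpow ξ (by linarith : 1 < p)).congr_deriv (by ring)

lemma my_hasDerivAt_mul_abs_rpow (hp : 2 ≤ p) (ξ : ℝ) :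
    HasDerivAt (fun x : ℝ => x * |x| ^ (p - 2)) ((p - 1) * |ξ| ^ (p - 2)) ξ := by
  rcases lt_trichotomy ξ 0 with h | rfl | h
  · have h1 : HasDerivAt (fun x : ℝ => (-x) ^ (p - 2)) ((p - 2) * (-ξ) ^ (p - 2 - 1) * (-1)) ξ :=
      (Real.hasDerivAt_rpow_const (p := p - 2) (Or.inl (by linarith : -ξ ≠ 0))).comp ξ
        (hasDerivAt_neg ξ)
    have h2 : HasDerivAt (fun x : ℝ => x * (-x) ^ (p - 2))
        (1 * (-ξ) ^ (p - 2) + ξ * ((p - 2) * (-ξ) ^ (p - 2 - 1) * (-1))) ξ :=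
      (hasDerivAt_id ξ).mul h1
    have h3 : (fun x : ℝ => x * |x| ^ (p - 2)) =ᶠ[nhds ξ]
        fun x : ℝ => x * (-x) ^ (p - 2) := by
      filter_upwards [Iio_mem_nhds h] with x hx
      rw [abs_of_neg hx]
    refine (h2.congr_of_eventuallyEq h3).congr_deriv ?_
    have key : (-ξ) ^ (p - 2) = (-ξ) * (-ξ) ^ (p - 2 - 1) := by
      have hh := Real.rpow_add (by linarith : (0:ℝ) < -ξ) 1 (p - 2 - 1)
      rw [Real.rpow_one, show (1:ℝ) + (p - 2 - 1) = p - 2 by ring] at hh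
      exact hh
    rw [abs_of_neg h, key]
    ring
  · -- ξ = 0
    rcases eq_or_lt_of_le hp with hp2 | hp2
    · have he : (fun x : ℝ => x * |x| ^ (p - 2)) = fun x : ℝ => x := by
        funext x
        rw [← hp2]
        norm_num
      rw [he, ← hp2]
      norm_num
      exact hasDerivAt_id' (0:ℝ)
    · have hd : HasDerivAt (fun x : ℝ => x * |x| ^ (p - 2)) 0 0 := by
        rw [hasDerivAt_iff_tendsto]
        have heq : ∀ x : ℝ, ‖x - 0‖⁻¹ * ‖x * |x| ^ (p - 2) - 0 * |(0:ℝ)| ^ (p - 2)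
            - (x - 0) • (0:ℝ)‖ = |x| ^ (p - 2) := by
          intro x
          rcases eq_or_ne x 0 with rfl | hx
          · simp [Real.zero_rpow (by linarith : p - 2 ≠ 0)]
          · simp only [sub_zero, smul_zero, zero_mul, sub_zero, Real.norm_eq_abs]
            rw [abs_mul, abs_of_nonneg (Real.rpow_nonneg (abs_nonneg x) _)]
            rw [← mul_assoc, inv_mul_cancel₀ (abs_ne_zero.2 hx), one_mul]
        rw [show (fun x : ℝ => ‖x - 0‖⁻¹ * ‖x * |x| ^ (p - 2) - 0 * |(0:ℝ)| ^ (p - 2)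
            - (x - 0) • (0:ℝ)‖) = fun x : ℝ => |x| ^ (p - 2) from funext heq]
        have hc := (continuous_abs_rpow (by linarith : (0:ℝ) ≤ p - 2)).tendsto 0
        simpa [Real.zero_rpow (by linarith : p - 2 ≠ 0)] using hc
      have h0 : ((p : ℝ) - 1) * |(0:ℝ)| ^ (p - 2) = 0 := by
        simp [Real.zero_rpow (by linarith : p - 2 ≠ 0)]
      rw [h0]
      exact hd
  · have h1 : HasDerivAt (fun x : ℝ => x ^ (p - 2)) ((p - 2) * ξ ^ (p - 2 - 1)) ξ :=
      Real.hasDerivAt_rpow_const (p := p - 2) (Or.inl (by linarith : ξ ≠ 0))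
    have h2 : HasDerivAt (fun x : ℝ => x * x ^ (p - 2))
        (1 * ξ ^ (p - 2) + ξ * ((p - 2) * ξ ^ (p - 2 - 1))) ξ :=
      (hasDerivAt_id ξ).mul h1
    have h3 : (fun x : ℝ => x * |x| ^ (p - 2)) =ᶠ[nhds ξ]
        fun x : ℝ => x * x ^ (p - 2) := by
      filter_upwards [Ioi_mem_nhds h] with x hx
      rw [abs_of_pos hx]
    refine (h2.congr_of_eventuallyEq h3).congr_deriv ?_
    have key : ξ ^ (p - 2) = ξ * ξ ^ (p - 2 - 1) := by
      have hh := Real.rpow_add h 1 (p - 2 - 1)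
      rw [Real.rpow_one, show (1:ℝ) + (p - 2 - 1) = p - 2 by ring] at hh
      exact hh
    rw [abs_of_pos h, key]
    ring

end Aux

section Kernel

variable {p t : ℝ}

/-- The real profile function. -/
noncomputable def Fk (p t : ℝ) : ℝ → ℝ := fun ξ => Real.exp (-t * |ξ| ^ p)

/-- Its first derivative. -/
noncomputable def Fk1 (p t : ℝ) : ℝ → ℝ :=
  fun ξ => -(t * p) * (ξ * |ξ| ^ (p - 2)) * Real.exp (-t * |ξ| ^ p)

/-- Its second derivative. -/
noncomputable def Fk2 (p t : ℝ) : ℝ → ℝ := fun ξ =>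
  -(t * p) * ((p - 1) * |ξ| ^ (p - 2)
    + (ξ * |ξ| ^ (p - 2)) * (-(t * p) * (ξ * |ξ| ^ (p - 2)))) * Real.exp (-t * |ξ| ^ p)

lemma hasDerivAt_Fk (hp : 2 ≤ p) (ξ : ℝ) : HasDerivAt (Fk p t) (Fk1 p t ξ) ξ := by
  have h := (((my_hasDerivAt_abs_rpow hp ξ).const_mul (-t)).exp)
  refine h.congr_deriv ?_
  unfold Fk1
  ring

lemma hasDerivAt_Fk1 (hp : 2 ≤ p) (ξ : ℝ) : HasDerivAt (Fk1 p t) (Fk2 p t ξ) ξ := by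
  have h := (((my_hasDerivAt_mul_abs_rpow hp ξ).mul (hasDerivAt_Fk (t := t) hp ξ)).const_mul
    (-(t * p)))
  refine (h.congr_of_eventuallyEq ?_).congr_deriv ?_
  · filter_upwards with x
    unfold Fk1 Fk
    simp only [Pi.mul_apply]
    ring
  · unfold Fk2 Fk Fk1
    ring

lemma continuous_Fk (hp : 2 ≤ p) : Continuous (Fk p t) :=
  Real.continuous_exp.comp ((continuous_const.mul (continuous_abs_rpow (by linarith))))

lemma continuous_Fk1 (hp : 2 ≤ p) : Continuous (Fk1 p t) := by
  unfold Fk1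
  exact ((continuous_const.mul (continuous_id.mul
    (continuous_abs_rpow (by linarith)))).mul (continuous_Fk hp))

lemma continuous_Fk2 (hp : 2 ≤ p) : Continuous (Fk2 p t) := by
  unfold Fk2
  have habs := continuous_abs_rpow (show (0:ℝ) ≤ p - 2 by linarith)
  exact ((continuous_const.mul ((continuous_const.mul habs).add
    ((continuous_id.mul habs).mul (continuous_const.mul
    (continuous_id.mul habs))))).mul (continuous_Fk hp))

lemma integrable_Fk (hp : 2 ≤ p) (ht : 0 < t) : Integrable (Fk p t) := by
  have h := aux_integrable (by linarith : 1 ≤ p) ht (le_refl (0:ℝ))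
  refine h.congr (Filter.Eventually.of_forall fun ξ => ?_)
  simp [Fk]

lemma integrable_Fk1 (hp : 2 ≤ p) (ht : 0 < t) : Integrable (Fk1 p t) := by
  have h := (aux_integrable (by linarith : 1 ≤ p) ht
    (show (0:ℝ) ≤ p - 1 by linarith)).const_mul (t * p)
  refine h.mono' ((continuous_Fk1 hp).aestronglyMeasurable) ?_
  filter_upwards with ξ
  unfold Fk1
  rw [Real.norm_eq_abs, abs_mul, abs_mul, abs_of_nonneg (Real.exp_nonneg _), abs_neg,
    abs_of_nonneg (by positivity : (0:ℝ) ≤ t * p), abs_mul,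
    abs_of_nonneg (Real.rpow_nonneg (abs_nonneg ξ) _), abs_mul_abs_rpow hp]
  exact le_of_eq (by ring)

lemma integrable_Fk2 (hp : 2 ≤ p) (ht : 0 < t) : Integrable (Fk2 p t) := by
  have h1 := (aux_integrable (by linarith : 1 ≤ p) ht
    (show (0:ℝ) ≤ p - 2 by linarith)).const_mul (t * p * (p - 1))
  have h2 := (aux_integrable (by linarith : 1 ≤ p) ht
    (show (0:ℝ) ≤ 2 * p - 2 by linarith)).const_mul (t * p * (t * p))
  refine (h1.add h2).mono' ((continuous_Fk2 hp).aestronglyMeasurable) ?_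
  filter_upwards with ξ
  unfold Fk2
  rw [Real.norm_eq_abs, abs_mul, abs_of_nonneg (Real.exp_nonneg _), abs_mul, abs_neg,
    abs_of_nonneg (by positivity : (0:ℝ) ≤ t * p)]
  have hb : |(p - 1) * |ξ| ^ (p - 2) + (ξ * |ξ| ^ (p - 2)) * (-(t * p) * (ξ * |ξ| ^ (p - 2)))|
      ≤ (p - 1) * |ξ| ^ (p - 2) + (t * p) * |ξ| ^ (2 * p - 2) := by
    refine (abs_add_le _ _).trans ?_
    gcongr
    · rw [abs_mul, abs_of_nonneg (by linarith : (0:ℝ) ≤ p - 1),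
        abs_of_nonneg (Real.rpow_nonneg (abs_nonneg ξ) _)]
    · rw [show (ξ * |ξ| ^ (p - 2)) * (-(t * p) * (ξ * |ξ| ^ (p - 2)))
          = -(t * p) * ((ξ * |ξ| ^ (p - 2)) * (ξ * |ξ| ^ (p - 2))) by ring,
        sq_mul_abs_rpow hp, abs_mul, abs_neg, abs_of_nonneg (by positivity : (0:ℝ) ≤ t * p),
        abs_of_nonneg (Real.rpow_nonneg (abs_nonneg ξ) _)]
  calc t * p * |(p - 1) * |ξ| ^ (p - 2) + (ξ * |ξ| ^ (p - 2)) * (-(t * p) * (ξ * |ξ| ^ (p - 2)))|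
        * Real.exp (-t * |ξ| ^ p)
      ≤ t * p * ((p - 1) * |ξ| ^ (p - 2) + (t * p) * |ξ| ^ (2 * p - 2))
        * Real.exp (-t * |ξ| ^ p) := by
        have htp : (0:ℝ) ≤ t * p := by positivity
        have he := Real.exp_nonneg (-t * |ξ| ^ p)
        exact mul_le_mul_of_nonneg_right (mul_le_mul_of_nonneg_left hb htp) he
    _ = t * p * (p - 1) * (|ξ| ^ (p - 2) * Real.exp (-t * |ξ| ^ p))
        + t * p * (t * p) * (|ξ| ^ (2 * p - 2) * Real.exp (-t * |ξ| ^ p)) := by ring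

/-- complexified profile. -/
noncomputable def FkC (p t : ℝ) : ℝ → ℂ := fun ξ => (Fk p t ξ : ℂ)

lemma deriv_FkC (hp : 2 ≤ p) : deriv (FkC p t) = fun ξ => (Fk1 p t ξ : ℂ) :=
  funext fun ξ => ((hasDerivAt_Fk (t := t) hp ξ).ofReal_comp).deriv

lemma deriv_FkC1 (hp : 2 ≤ p) :
    deriv (fun ξ => (Fk1 p t ξ : ℂ)) = fun ξ => (Fk2 p t ξ : ℂ) :=
  funext fun ξ => ((hasDerivAt_Fk1 (t := t) hp ξ).ofReal_comp).deriv

lemma fourier_FkC2 (hp : 2 ≤ p) (ht : 0 < t) (x : ℝ) :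
    𝓕 (fun ξ => (Fk2 p t ξ : ℂ)) x
      = (2 * ↑Real.pi * Complex.I * x) • ((2 * ↑Real.pi * Complex.I * x)
        • 𝓕 (FkC p t) x) := by
  have hd1 : Differentiable ℝ (FkC p t) := fun ξ =>
    ((hasDerivAt_Fk (t := t) hp ξ).ofReal_comp).differentiableAt
  have hd2 : Differentiable ℝ (fun ξ => (Fk1 p t ξ : ℂ)) := fun ξ =>
    ((hasDerivAt_Fk1 (t := t) hp ξ).ofReal_comp).differentiableAt
  have hi0 : Integrable (FkC p t) := (integrable_Fk hp ht).ofReal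
  have hi1 : Integrable (fun ξ => (Fk1 p t ξ : ℂ)) := (integrable_Fk1 hp ht).ofReal
  have hi2 : Integrable (fun ξ => (Fk2 p t ξ : ℂ)) := (integrable_Fk2 hp ht).ofReal
  have e1 : 𝓕 (deriv (FkC p t)) = fun x : ℝ => (2 * ↑Real.pi * Complex.I * x) • 𝓕 (FkC p t) x :=
    Real.fourier_deriv hi0 hd1 (by rw [deriv_FkC hp]; exact hi1)
  have e2 : 𝓕 (deriv (fun ξ => (Fk1 p t ξ : ℂ)))
      = fun x : ℝ => (2 * ↑Real.pi * Complex.I * x) • 𝓕 (fun ξ => (Fk1 p t ξ : ℂ)) x :=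
    Real.fourier_deriv hi1 hd2 (by rw [deriv_FkC1 hp]; exact hi2)
  calc 𝓕 (fun ξ => (Fk2 p t ξ : ℂ)) x = 𝓕 (deriv (fun ξ => (Fk1 p t ξ : ℂ))) x := by
        rw [deriv_FkC1 hp]
    _ = (2 * ↑Real.pi * Complex.I * x) • 𝓕 (fun ξ => (Fk1 p t ξ : ℂ)) x := by rw [e2]
    _ = (2 * ↑Real.pi * Complex.I * x) • 𝓕 (deriv (FkC p t)) x := by rw [deriv_FkC hp]
    _ = (2 * ↑Real.pi * Complex.I * x) • ((2 * ↑Real.pi * Complex.I * x)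
        • 𝓕 (FkC p t) x) := by rw [e1]

lemma norm_fourier_le (h : ℝ → ℂ) (x : ℝ) : ‖𝓕 h x‖ ≤ ∫ v, ‖h v‖ := by
  rw [Real.fourier_real_eq]
  refine (norm_integral_le_integral_norm _).trans_eq ?_
  congr 1
  funext v
  simp [Circle.smul_def, Circle.norm_coe]

lemma integrable_fourier_FkC (hp : 2 ≤ p) (ht : 0 < t) : Integrable (𝓕 (FkC p t)) := by
  have hi0 : Integrable (FkC p t) := (integrable_Fk hp ht).ofReal
  set A := ∫ v, ‖FkC p t v‖ with hA
  set B := ∫ v, ‖(Fk2 p t v : ℂ)‖ with hB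
  have hcont : Continuous (𝓕 (FkC p t)) :=
    VectorFourier.fourierIntegral_continuous Real.continuous_fourierChar
      (by exact continuous_inner) hi0
  have hbound : ∀ x : ℝ, ‖𝓕 (FkC p t) x‖ ≤ (A + B / (2 * Real.pi) ^ 2) * (1 + x ^ 2)⁻¹ := by
    intro x
    have h1 : ‖𝓕 (FkC p t) x‖ ≤ A := norm_fourier_le _ x
    have h2 : (2 * Real.pi) ^ 2 * x ^ 2 * ‖𝓕 (FkC p t) x‖ ≤ B := by
      have := norm_fourier_le (fun ξ => (Fk2 p t ξ : ℂ)) x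
      rw [fourier_FkC2 hp ht x] at this
      rw [norm_smul, norm_smul] at this
      have hn : ‖(2 * ↑Real.pi * Complex.I * (x:ℂ))‖ = 2 * Real.pi * |x| := by
        rw [norm_mul, norm_mul, norm_mul, Complex.norm_I]
        simp [abs_of_pos Real.pi_pos]
      rw [hn] at this
      calc (2 * Real.pi) ^ 2 * x ^ 2 * ‖𝓕 (FkC p t) x‖
          = (2 * Real.pi * |x|) * ((2 * Real.pi * |x|) * ‖𝓕 (FkC p t) x‖) := by
            rw [← sq_abs x]; ring
        _ ≤ B := this
    have hpos : (0:ℝ) < 1 + x ^ 2 := by positivity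
    have hpi : (0:ℝ) < (2 * Real.pi) ^ 2 := by positivity
    have h5 : x ^ 2 * ‖𝓕 (FkC p t) x‖ ≤ B / (2 * Real.pi) ^ 2 := by
      rw [le_div_iff₀ hpi]
      calc x ^ 2 * ‖𝓕 (FkC p t) x‖ * (2 * Real.pi) ^ 2
          = (2 * Real.pi) ^ 2 * x ^ 2 * ‖𝓕 (FkC p t) x‖ := by ring
        _ ≤ B := h2
    have h4 : (1 + x ^ 2) * ‖𝓕 (FkC p t) x‖ ≤ A + B / (2 * Real.pi) ^ 2 := by
      nlinarith
    calc ‖𝓕 (FkC p t) x‖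
        = ((1 + x ^ 2) * ‖𝓕 (FkC p t) x‖) * (1 + x ^ 2)⁻¹ := by
          field_simp
      _ ≤ (A + B / (2 * Real.pi) ^ 2) * (1 + x ^ 2)⁻¹ :=
          mul_le_mul_of_nonneg_right h4 (inv_nonneg.2 hpos.le)
  exact (integrable_inv_one_add_sq.const_mul (A + B / (2 * Real.pi) ^ 2)).mono'
    hcont.aestronglyMeasurable (Filter.Eventually.of_forall fun x => by
      simpa [norm_mul, abs_of_nonneg (le_of_lt (by positivity : (0:ℝ) < (1 + x ^ 2)⁻¹))]
        using hbound x)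

lemma kernelG_eq_fourier {β : ℝ} (t : ℝ) (x : ℝ) :
    kernelG β t x = 𝓕 (FkC (2 * β) t) (-x / (2 * Real.pi)) := by
  rw [Real.fourier_real_eq_integral_exp_smul, kernelG]
  refine integral_congr_ae (Filter.Eventually.of_forall fun v => ?_)
  show (Real.exp (-t * |v| ^ (2 * β)) : ℂ) * Complex.exp (Complex.I * x * v)
      = Complex.exp (↑(-2 * Real.pi * v * (-x / (2 * Real.pi))) * Complex.I) • FkC (2 * β) t v
  rw [smul_eq_mul, mul_comm]
  congr 1
  rw [show -2 * Real.pi * v * (-x / (2 * Real.pi)) = x * v from by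
    field_simp]
  congr 1
  push_cast
  ring

lemma kernelG_integrable {β : ℝ} (hβ : 1 ≤ β) {t : ℝ} (ht : 0 < t) :
    Integrable (fun x => kernelG β t x) := by
  have hp : 2 ≤ 2 * β := by linarith
  have h := integrable_fourier_FkC (t := t) hp ht
  have harg : ∀ x : ℝ, -x / (2 * Real.pi) = -(2 * Real.pi)⁻¹ * x := fun x => by ring
  have heq : (fun x => kernelG β t x)
      = fun x => 𝓕 (FkC (2 * β) t) (-(2 * Real.pi)⁻¹ * x) := by
    funext x
    rw [kernelG_eq_fourier, harg]
  rw [heq]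
  exact (MeasureTheory.integrable_comp_mul_left_iff _
    (neg_ne_zero.2 (inv_ne_zero (by positivity)))).2 h

end Kernel

/-- For `β ≥ 1` and every `t > 0`, `g(·,t)` is integrable and its `L¹(ℝ)` norm is
independent of `t`: `‖g(·,t)‖_{L¹} = ‖g(·,1)‖_{L¹} < ∞`. -/
theorem kernelG_L1 (β : ℝ) (hβ : 1 ≤ β) (t : ℝ) (ht : 0 < t) :
    Integrable (fun x => kernelG β t x) ∧
      eLpNorm (fun x => kernelG β t x) 1 volume
        = eLpNorm (fun x => kernelG β 1 x) 1 volume := by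
  have hIt : Integrable (fun x => kernelG β t x) := kernelG_integrable hβ ht
  have hI1 : Integrable (fun x => kernelG β 1 x) := kernelG_integrable hβ one_pos
  refine ⟨hIt, ?_⟩
  set s : ℝ := t ^ (-(2 * β)⁻¹) with hs_def
  have hs : 0 < s := Real.rpow_pos_of_pos ht _
  have hβ0 : (2 * β) ≠ 0 := by positivity
  have hpow : s ^ (2 * β) = t⁻¹ := by
    rw [hs_def, ← Real.rpow_mul ht.le, show -(2 * β)⁻¹ * (2 * β) = -1 by field_simp,
      Real.rpow_neg_one]
  have hscale : ∀ x : ℝ, kernelG β t x = (s : ℂ) * kernelG β 1 (s * x) := by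
    intro x
    have hcv := Measure.integral_comp_mul_left
      (fun ξ => (Real.exp (-t * |ξ| ^ (2 * β)) : ℂ) * Complex.exp (Complex.I * x * ξ)) s
    rw [kernelG, kernelG]
    have h1 : ∀ η : ℝ, (Real.exp (-(1:ℝ) * |η| ^ (2 * β)) : ℂ)
        * Complex.exp (Complex.I * ((s * x : ℝ) : ℂ) * (η : ℂ))
        = (Real.exp (-t * |s * η| ^ (2 * β)) : ℂ)
          * Complex.exp (Complex.I * (x : ℂ) * ((s * η : ℝ) : ℂ)) := by
      intro η
      have habs : |s * η| ^ (2 * β) = s ^ (2 * β) * |η| ^ (2 * β) := by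
        rw [abs_mul, abs_of_pos hs, Real.mul_rpow hs.le (abs_nonneg η)]
      congr 2
      · rw [habs, hpow]
        field_simp
      · push_cast
        ring
    have h2 : (∫ η : ℝ, (Real.exp (-(1:ℝ) * |η| ^ (2 * β)) : ℂ)
          * Complex.exp (Complex.I * ((s * x : ℝ) : ℂ) * (η : ℂ)))
        = |s⁻¹| • ∫ ξ : ℝ, (Real.exp (-t * |ξ| ^ (2 * β)) : ℂ)
          * Complex.exp (Complex.I * x * ξ) := by
      rw [← hcv]
      exact integral_congr_ae (Filter.Eventually.of_forall fun η => h1 η)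
    rw [h2, abs_of_pos (inv_pos.2 hs), Complex.real_smul, ← mul_assoc,
      show (s : ℂ) * ((s⁻¹ : ℝ) : ℂ) = 1 by
        push_cast
        exact mul_inv_cancel₀ (Complex.ofReal_ne_zero.2 hs.ne'),
      one_mul]
  have hnorm : ∀ x : ℝ, ‖kernelG β t x‖ = s * ‖kernelG β 1 (s * x)‖ := by
    intro x
    rw [hscale x, norm_mul, Complex.norm_real, Real.norm_eq_abs, abs_of_pos hs]
  rw [eLpNorm_one_eq_lintegral_enorm, eLpNorm_one_eq_lintegral_enorm,
    ← ofReal_integral_norm_eq_lintegral_enorm hIt,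
    ← ofReal_integral_norm_eq_lintegral_enorm hI1]
  congr 1
  calc ∫ x, ‖kernelG β t x‖
      = ∫ x, s * ‖kernelG β 1 (s * x)‖ :=
        integral_congr_ae (Filter.Eventually.of_forall hnorm)
    _ = s * ∫ x, ‖kernelG β 1 (s * x)‖ := by
        rw [integral_const_mul]
    _ = s * (|s⁻¹| • ∫ y, ‖kernelG β 1 y‖) := by
        rw [Measure.integral_comp_mul_left (fun y => ‖kernelG β 1 y‖) s]
    _ = ∫ y, ‖kernelG β 1 y‖ := by
        rw [abs_of_pos (inv_pos.2 hs), smul_eq_mul, ← mul_assoc,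
          mul_inv_cancel₀ hs.ne', one_mul]
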